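/- arXiv:2305.19042 — 9 statements merged into one kernel-verified Lean document; each statement's English description precedes it below -/
import Mathlib

section
/- For any ideal I of a pre-L-algebra X, the relation ∼_I defined by x ∼_I y iff x·y ∈ I and y·x ∈ I is a congruence on X. -/
class PreLAlgebra (X : Type*) extends Mul X, One X where
  mul_self : ∀ x : X, x * x = 1
  mul_unit : ∀ x : X, x * 1 = 1
  unit_mul : ∀ x : X, 1 * x = x
  cycl : ∀ x y z : X, (x * y) * (x * z) = (y * x) * (y * z)

class LAlgebra (X : Type*) extends PreLAlgebra X where
  antisymm : ∀ x y : X, x * y = 1 → y * x = 1 → x = y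

def IsIdeal {X : Type*} [PreLAlgebra X] (I : Set X) : Prop :=
  (1 : X) ∈ I ∧
  (∀ x y : X, x ∈ I → x * y ∈ I → y ∈ I) ∧
  (∀ x y : X, x ∈ I → (x * y) * y ∈ I) ∧
  (∀ x y : X, x ∈ I → y * x ∈ I) ∧
  (∀ x y : X, x ∈ I → y * (x * y) ∈ I)

def IsCongruence {X : Type*} [PreLAlgebra X] (r : X → X → Prop) : Prop :=
  Equivalence r ∧ ∀ x x' y y' : X, r x x' → r y y' → r (x * y) (x' * y')

theorem ideal_gives_congruence {X : Type*} [PreLAlgebra X]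
    (I : Set X) (hI : IsIdeal I) :
    IsCongruence (fun x y => x * y ∈ I ∧ y * x ∈ I) := by
  obtain ⟨h1, h2, h3, h4, h5⟩ := hI
  -- transitivity-style lemma
  have htr : ∀ p q r : X, p * q ∈ I → q * r ∈ I → p * r ∈ I := by
    intro p q r hpq hqr
    apply h2 (p * q) _ hpq
    have e : (p * q) * (p * r) = (q * p) * (q * r) := PreLAlgebra.cycl p q r
    rw [e]
    exact h4 _ _ hqr
  -- key lemma: a ∈ I, (a*c)*d ∈ I ⇒ c*d ∈ I
  have key : ∀ a c d : X, a ∈ I → (a * c) * d ∈ I → c * d ∈ I := by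
    intro a c d ha h
    apply h2 (c * (a * c)) _ (h5 a c ha)
    have e : (c * (a * c)) * (c * d) = ((a * c) * c) * ((a * c) * d) :=
      PreLAlgebra.cycl c (a * c) d
    rw [e]
    exact h4 _ _ h
  -- compatibility in the first argument
  have first : ∀ x x' y : X, x * x' ∈ I → x' * x ∈ I → (x * y) * (x' * y) ∈ I := by
    intro x x' y hxx' hx'x
    apply key (x * x') (x * y) (x' * y) hxx'
    have e : (x * x') * (x * y) = (x' * x) * (x' * y) := PreLAlgebra.cycl x x' y
    rw [e]
    exact h3 _ _ hx'x
  -- compatibility in the second argument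
  have second : ∀ x y y' : X, y * y' ∈ I → (x * y) * (x * y') ∈ I := by
    intro x y y' hyy'
    have e : (x * y) * (x * y') = (y * x) * (y * y') := PreLAlgebra.cycl x y y'
    rw [e]
    exact h4 _ _ hyy'
  refine ⟨⟨?_, ?_, ?_⟩, ?_⟩
  · intro x
    constructor <;> · rw [PreLAlgebra.mul_self]; exact h1
  · intro x y ⟨hxy, hyx⟩; exact ⟨hyx, hxy⟩
  · intro x y z ⟨hxy, hyx⟩ ⟨hyz, hzy⟩
    exact ⟨htr x y z hxy hyz, htr z y x hzy hyx⟩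
  · intro x x' y y' ⟨hxx', hx'x⟩ ⟨hyy', hy'y⟩
    constructor
    · exact htr _ (x' * y) _ (first x x' y hxx' hx'x) (second x' y y' hyy')
    · exact htr _ (x * y') _ (first x' x y' hx'x hxx') (second x y' y hy'y)
end

section
/- Let X be a pre-L-algebra, ∼ a congruence on X, and I an ideal of X. Then the class [1]_∼ is contained in I if and only if ∼ is contained in the congruence ∼_I (where x ∼_I y iff x·y ∈ I and y·x ∈ I). That is, the maps ∼ ↦ [1]_∼ and I ↦ ∼_I form a monotone Galois connection between congruences and ideals. -/
theorem galois_connection {X : Type*} [PreLAlgebra X]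
    (r : X → X → Prop) (hr : IsCongruence r)
    (I : Set X) (hI : IsIdeal I) :
    {x : X | r x 1} ⊆ I ↔ ∀ x y : X, r x y → (x * y ∈ I ∧ y * x ∈ I) := by
  obtain ⟨heq, hcomp⟩ := hr
  constructor
  · intro hsub x y hxy
    constructor
    · have : r (x * y) (y * y) := hcomp x y y y hxy (heq.refl y)
      rw [PreLAlgebra.mul_self] at this
      exact hsub this
    · have : r (y * x) (x * x) := hcomp y x x x (heq.symm hxy) (heq.refl x)
      rw [PreLAlgebra.mul_self] at this
      exact hsub this
  · intro h x hx
    have := (h x 1 hx).2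
    rwa [PreLAlgebra.unit_mul] at this
end

section
/- Let ∼ be a congruence on a pre-L-algebra X such that X/∼ is an L-algebra, and let I = [1]_∼. Then ∼ equals ∼_I, i.e., x ∼ y if and only if x·y ∈ I and y·x ∈ I. -/
theorem congruence_eq_ideal_congruence {X : Type*} [PreLAlgebra X]
    (r : X → X → Prop) (hr : IsCongruence r)
    (hL : ∀ x y : X, r (x * y) 1 → r (y * x) 1 → r x y) :
    ∀ x y : X, r x y ↔ (x * y ∈ {z : X | r z 1} ∧ y * x ∈ {z : X | r z 1}) := by
  obtain ⟨heq, hc⟩ := hr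
  intro x y
  constructor
  · intro h
    constructor
    · have := hc x y y y h (heq.refl y)
      rwa [PreLAlgebra.mul_self] at this
    · have := hc y x x x (heq.symm h) (heq.refl x)
      rwa [PreLAlgebra.mul_self] at this
  · rintro ⟨h1, h2⟩
    exact hL x y h1 h2
end

section
/- For any pre-L-algebra X there is a bijection between the set of ideals of X and the set of congruences ∼ on X for which the quotient X/∼ is an L-algebra. -/
namespace IdealCongrAux

variable {X : Type*} [PreLAlgebra X]

open PreLAlgebra

lemma mul_mem {I : Set X} (hI : IsIdeal I) (y : X) {x : X} (hx : x ∈ I) :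
    y * x ∈ I := hI.2.2.2.1 x y hx

/-- If `a ∈ I` and `(a*b)*c ∈ I` then `b*c ∈ I`. -/
lemma L1 {I : Set X} (hI : IsIdeal I) {a : X} (b c : X) (ha : a ∈ I)
    (h : (a * b) * c ∈ I) : b * c ∈ I := by
  have h1 : ((a * b) * b) * ((a * b) * c) ∈ I := mul_mem hI _ h
  rw [cycl] at h1
  exact hI.2.1 _ _ (hI.2.2.2.2 a b ha) h1

lemma trans_mem {I : Set X} (hI : IsIdeal I) {x y z : X}
    (hxy : x * y ∈ I) (hyz : y * z ∈ I) : x * z ∈ I := by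
  have h1 : (y * x) * (y * z) ∈ I := mul_mem hI _ hyz
  rw [cycl] at h1
  exact hI.2.1 _ _ hxy h1

lemma compat_right {I : Set X} (hI : IsIdeal I) (x : X) {y y' : X}
    (h : y * y' ∈ I) : (x * y) * (x * y') ∈ I := by
  rw [cycl]
  exact mul_mem hI _ h

lemma compat_left {I : Set X} (hI : IsIdeal I) {x x' : X} (y : X)
    (hxx' : x * x' ∈ I) (hx'x : x' * x ∈ I) : (x * y) * (x' * y) ∈ I := by
  have h1 : ((x' * x) * (x' * y)) * (x' * y) ∈ I := hI.2.2.1 _ _ hx'x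
  rw [cycl] at h1
  exact L1 hI _ _ hxx' h1

/-- The relation associated to an ideal. -/
def rel (I : Set X) (x y : X) : Prop := x * y ∈ I ∧ y * x ∈ I

lemma rel_isCongruence {I : Set X} (hI : IsIdeal I) : IsCongruence (rel I) := by
  constructor
  · constructor
    · intro x; constructor <;> · rw [mul_self]; exact hI.1
    · intro x y h; exact ⟨h.2, h.1⟩
    · intro x y z hxy hyz
      exact ⟨trans_mem hI hxy.1 hyz.1, trans_mem hI hyz.2 hxy.2⟩
  · intro x x' y y' hx hy
    constructor
    · exact trans_mem hI (compat_right hI x hy.1) (compat_left hI y' hx.1 hx.2)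
    · exact trans_mem hI (compat_right hI x' hy.2) (compat_left hI y hx.2 hx.1)

lemma rel_one {I : Set X} (hI : IsIdeal I) (x : X) : rel I x 1 ↔ x ∈ I := by
  unfold rel
  rw [mul_unit, unit_mul]
  exact ⟨fun h => h.2, fun h => ⟨hI.1, h⟩⟩

/-- The ideal associated to a congruence. -/
def idl (r : X → X → Prop) : Set X := {x | r x 1}

lemma idl_isIdeal {r : X → X → Prop} (hr : IsCongruence r) : IsIdeal (idl r) := by
  obtain ⟨heq, hc⟩ := hr
  have key : ∀ x y : X, r x 1 → r (x * y) y := by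
    intro x y h
    have := hc x 1 y y h (heq.refl y)
    rwa [unit_mul] at this
  refine ⟨heq.refl 1, ?_, ?_, ?_, ?_⟩
  · intro x y hx hxy
    exact heq.trans (heq.trans (heq.symm (key x y hx)) hxy) (heq.refl 1)
  · intro x y hx
    have := hc (x * y) y y y (key x y hx) (heq.refl y)
    rwa [mul_self] at this
  · intro x y hx
    have := hc y y x 1 (heq.refl y) hx
    rwa [mul_unit] at this
  · intro x y hx
    have := hc y y (x * y) y (heq.refl y) (key x y hx)
    rwa [mul_self] at this

lemma rel_of_r {r : X → X → Prop} (hr : IsCongruence r) {x y : X} (h : r x y) :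
    r (x * y) 1 := by
  have := hr.2 x y y y h (hr.1.refl y)
  rwa [mul_self] at this

end IdealCongrAux

theorem ideals_biject_with_lalgebra_congruences (X : Type*) [PreLAlgebra X] :
    Nonempty ({I : Set X // IsIdeal I} ≃
      {r : X → X → Prop // IsCongruence r ∧
        ∀ x y : X, r (x * y) 1 → r (y * x) 1 → r x y}) := by
  open IdealCongrAux in
  refine ⟨{
    toFun := fun I => ⟨rel I.1, rel_isCongruence I.2, ?_⟩
    invFun := fun r => ⟨idl r.1, idl_isIdeal r.2.1⟩
    left_inv := ?_
    right_inv := ?_ }⟩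
  · intro x y hxy hyx
    exact ⟨((rel_one I.2 _).mp hxy), ((rel_one I.2 _).mp hyx)⟩
  · intro ⟨I, hI⟩
    ext x
    exact rel_one hI x
  · intro ⟨r, hr, hL⟩
    refine Subtype.ext ?_
    funext x y
    apply propext
    constructor
    · intro h
      exact hL x y h.1 h.2
    · intro h
      exact ⟨rel_of_r hr h, rel_of_r hr (hr.1.symm h)⟩
end

section
/- On any pre-L-algebra X, the relation x ∼ y defined by x·y = 1 and y·x = 1 is a congruence, and the quotient X/∼ is an L-algebra (this gives the L-algebra reflection of X). -/
lemma preL_trans {X : Type*} [PreLAlgebra X] {x y z : X}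
    (h1 : x * y = 1) (h2 : y * z = 1) : x * z = 1 := by
  have := PreLAlgebra.cycl x y z
  rw [h1, h2, PreLAlgebra.unit_mul, PreLAlgebra.mul_unit] at this
  exact this

lemma preL_left_eq {X : Type*} [PreLAlgebra X] {x x' : X} (y : X)
    (h1 : x * x' = 1) (h2 : x' * x = 1) : x * y = x' * y := by
  have := PreLAlgebra.cycl x x' y
  rw [h1, h2, PreLAlgebra.unit_mul, PreLAlgebra.unit_mul] at this
  exact this

theorem lalgebra_reflection {X : Type*} [PreLAlgebra X] :
    IsCongruence (fun x y : X => x * y = 1 ∧ y * x = 1) ∧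
    (∀ x y : X,
      ((x * y) * 1 = 1 ∧ 1 * (x * y) = 1) →
      ((y * x) * 1 = 1 ∧ 1 * (y * x) = 1) →
      (x * y = 1 ∧ y * x = 1)) := by
  constructor
  · constructor
    · exact ⟨fun x => ⟨PreLAlgebra.mul_self x, PreLAlgebra.mul_self x⟩,
        fun h => ⟨h.2, h.1⟩,
        fun h1 h2 => ⟨preL_trans h1.1 h2.1, preL_trans h2.2 h1.2⟩⟩
    · intro x x' y y' hx hy
      have hl : x * y = x' * y := preL_left_eq y hx.1 hx.2
      have h1 : (x' * y) * (x' * y') = 1 := by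
        have := PreLAlgebra.cycl x' y y'
        rw [hy.1, PreLAlgebra.mul_unit] at this
        exact this
      have h2 : (x' * y') * (x' * y) = 1 := by
        have := PreLAlgebra.cycl x' y' y
        rw [hy.2, PreLAlgebra.mul_unit] at this
        exact this
      exact ⟨hl ▸ h1, hl ▸ h2⟩
  · intro x y h1 h2
    constructor
    · rw [← PreLAlgebra.unit_mul (x * y)]; exact h1.2
    · rw [← PreLAlgebra.unit_mul (y * x)]; exact h2.2
end

section
/- The class of L-algebras is not closed under homomorphic images: there exists an L-algebra X with 4 elements, a magma Y with 3 elements satisfying the pre-L-algebra axioms but not the L-algebra axiom, and a surjective map f : X → Y with f(u·v) = f(u)·f(v) for all u,v. Concretely, take X = {x,y,z,1} with x·x=1, x·y=y, x·z=z, x·1=1, y·x=1, y·y=1, y·z=x, y·1=1, z·x=1, z·y=x, z·z=1, z·1=1, 1·x=x, 1·y=y, 1·z=z, 1·1=1, and Y = {a,b,1} with a·a=a·b=a·1=b·a=b·b=b·1=1, 1·a=a, 1·b=b, 1·1=1, and f(x)=f(1)=1, f(y)=a, f(z)=b. -/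
def Xmul : Fin 4 → Fin 4 → Fin 4 :=
  ![![3,1,2,3], ![3,3,0,3], ![3,0,3,3], ![0,1,2,3]]

def Ymul : Fin 3 → Fin 3 → Fin 3 :=
  ![![2,2,2], ![2,2,2], ![0,1,2]]

theorem lalgebras_not_closed_under_images :
    ∃ (X Y : Type) (_ : Mul X) (_ : One X) (_ : Mul Y) (_ : One Y) (f : X → Y),
      Nat.card X = 4 ∧ Nat.card Y = 3 ∧
      (∀ x : X, x * x = 1) ∧ (∀ x : X, x * 1 = 1) ∧ (∀ x : X, 1 * x = x) ∧
      (∀ x y z : X, (x * y) * (x * z) = (y * x) * (y * z)) ∧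
      (∀ x y : X, x * y = 1 → y * x = 1 → x = y) ∧
      (∀ y : Y, y * y = 1) ∧ (∀ y : Y, y * 1 = 1) ∧ (∀ y : Y, 1 * y = y) ∧
      (∀ a b c : Y, (a * b) * (a * c) = (b * a) * (b * c)) ∧
      ¬ (∀ a b : Y, a * b = 1 → b * a = 1 → a = b) ∧
      Function.Surjective f ∧
      (∀ u v : X, f (u * v) = f u * f v) := by
  refine ⟨Fin 4, Fin 3, ⟨Xmul⟩, ⟨3⟩, ⟨Ymul⟩, ⟨2⟩, ![2,0,1,2], ?_, ?_, ?_, ?_, ?_, ?_, ?_, ?_, ?_, ?_, ?_, ?_, ?_, ?_⟩ <;>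
    first | decide | simp [Nat.card_eq_fintype_card]
end

section
/- There exists an L-algebra X (the two-element L-algebra {0,1} with 0·0 = 0·1 = 1·1 = 1 and 1·0 = 0) and a subalgebra R = {(0,1),(1,0),(1,1)} of X × X whose two projection kernel congruences Eq(p₁) and Eq(p₂) do not permute: ((1,0),(0,1)) ∈ Eq(p₂)∘Eq(p₁) but ((1,0),(0,1)) ∉ Eq(p₁)∘Eq(p₂). Hence the quasivariety of L-algebras is not congruence-permutable (not Mal'tsev). -/
/-- The two-element L-algebra on `Bool`, with `1 = true`, `0 = false`:
`0·0 = 0·1 = 1·1 = 1` and `1·0 = 0`. -/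
def bmul (a b : Bool) : Bool := !a || b

/-- Componentwise multiplication on pairs. -/
def pmul (p q : Bool × Bool) : Bool × Bool := (bmul p.1 q.1, bmul p.2 q.2)

/-- The subalgebra `R = {(0,1),(1,0),(1,1)}` of `X × X`. -/
def R : Set (Bool × Bool) := {(false, true), (true, false), (true, true)}

/-- The kernel congruence of the first projection `p₁ : R → X`. -/
def E1 (p q : Bool × Bool) : Prop := p ∈ R ∧ q ∈ R ∧ p.1 = q.1

/-- The kernel congruence of the second projection `p₂ : R → X`. -/
def E2 (p q : Bool × Bool) : Prop := p ∈ R ∧ q ∈ R ∧ p.2 = q.2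

theorem lalg_not_maltsev :
    (∀ a : Bool, bmul a a = true) ∧
    (∀ a : Bool, bmul a true = true) ∧
    (∀ a : Bool, bmul true a = a) ∧
    (∀ a b c : Bool, bmul (bmul a b) (bmul a c) = bmul (bmul b a) (bmul b c)) ∧
    (∀ a b : Bool, bmul a b = true → bmul b a = true → a = b) ∧
    (∀ p q : Bool × Bool, p ∈ R → q ∈ R → pmul p q ∈ R) ∧
    (∃ m : Bool × Bool, E1 (true, false) m ∧ E2 m (false, true)) ∧
    ¬ (∃ m : Bool × Bool, E2 (true, false) m ∧ E1 m (false, true)) := by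
  refine ⟨by decide, by decide, by decide, by decide, by decide, ?_, ?_, ?_⟩
  · intro p q hp hq
    simp [R, Set.mem_insert_iff] at hp hq ⊢
    rcases hp with h|h|h <;> rcases hq with h'|h'|h' <;> subst h <;> subst h' <;> simp [pmul, bmul]
  · exact ⟨(true, true), ⟨by simp [R], by simp [R], rfl⟩, ⟨by simp [R], by simp [R], rfl⟩⟩
  · rintro ⟨m, ⟨_, hm, h2⟩, _, _, h1⟩
    simp [R, Set.mem_insert_iff] at hm
    rcases hm with h|h|h <;> subst h <;> simp_all
end

section
/- The variety of pre-L-algebras is permutable at 1: for any two congruences R and S on a pre-L-algebra X and any x ∈ X, if there exists y with x R y and y S 1, then there exists z with x S z and z R 1. -/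
theorem permutable_at_one {X : Type*} [PreLAlgebra X]
    (R S : X → X → Prop) (hR : IsCongruence R) (hS : IsCongruence S) (x : X)
    (h : ∃ y : X, R x y ∧ S y 1) :
    ∃ z : X, S x z ∧ R z 1 := by
  obtain ⟨y, hxy, hy1⟩ := h
  refine ⟨y * x, ?_, ?_⟩
  · have : S (y * x) (1 * x) := hS.2 _ _ _ _ hy1 (hS.1.refl x)
    rw [PreLAlgebra.unit_mul] at this
    exact hS.1.symm this
  · have : R (y * x) (y * y) := hR.2 _ _ _ _ (hR.1.refl y) hxy
    rwa [PreLAlgebra.mul_self] at this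
end

section
/- Let X be an L-algebra and I, J ideals of X. If an ideal N of X has the property that the map μ : I × J → X/∼_N, μ(i,j) = [i·j], is an L-algebra morphism (i.e., [i·i']·[j·j'] = [(i·j)·(i'·j')] for all i,i' ∈ I, j,j' ∈ J), then I ∩ J ⊆ N. Consequently the commutator [I,J] (the smallest such ideal) equals I ∩ J. -/
-- auxiliary lemmas

lemma ideal_trans {X : Type*} [PreLAlgebra X] {N : Set X} (hN : IsIdeal N)
    {a b c : X} (h1 : b * a ∈ N) (h2 : a * c ∈ N) : b * c ∈ N := by
  obtain ⟨-, hmp, -, habs, -⟩ := hN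
  have : (b * a) * (b * c) ∈ N := by
    rw [PreLAlgebra.cycl]
    exact habs _ _ h2
  exact hmp _ _ h1 this

lemma ideal_right {X : Type*} [PreLAlgebra X] {N : Set X} (hN : IsIdeal N)
    {y y' : X} (x : X) (h : y * y' ∈ N) : (x * y) * (x * y') ∈ N := by
  rw [PreLAlgebra.cycl]
  exact hN.2.2.2.1 _ _ h

lemma ideal_left {X : Type*} [PreLAlgebra X] {N : Set X} (hN : IsIdeal N)
    {x x' : X} (y : X) (h1 : x * x' ∈ N) (h2 : x' * x ∈ N) :
    (x * y) * (x' * y) ∈ N := by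
  have ha : ((x' * x) * (x' * y)) * (x' * y) ∈ N := hN.2.2.1 _ _ h2
  rw [PreLAlgebra.cycl] at ha
  have hb : (x * y) * ((x * x') * (x * y)) ∈ N := hN.2.2.2.2 _ _ h1
  exact ideal_trans hN hb ha

lemma ideal_compat {X : Type*} [PreLAlgebra X] {N : Set X} (hN : IsIdeal N)
    {x x' y y' : X} (hx : x * x' ∈ N ∧ x' * x ∈ N) (hy : y * y' ∈ N ∧ y' * y ∈ N) :
    (x * y) * (x' * y') ∈ N ∧ (x' * y') * (x * y) ∈ N := by
  have h1 : (x * y) * (x' * y) ∈ N := ideal_left hN y hx.1 hx.2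
  have h2 : (x' * y) * (x * y) ∈ N := ideal_left hN y hx.2 hx.1
  have h3 : (x' * y) * (x' * y') ∈ N := ideal_right hN x' hy.1
  have h4 : (x' * y') * (x' * y) ∈ N := ideal_right hN x' hy.2
  exact ⟨ideal_trans hN h1 h3, ideal_trans hN h4 h2⟩

lemma ideal_equiv_one {X : Type*} [PreLAlgebra X] {N : Set X} (hN : IsIdeal N)
    {x : X} (h : x ∈ N) : x * 1 ∈ N ∧ 1 * x ∈ N := by
  rw [PreLAlgebra.mul_unit, PreLAlgebra.unit_mul]
  exact ⟨hN.1, h⟩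

theorem commutator_eq_inter {X : Type*} [LAlgebra X]
    (I J : Set X) (hI : IsIdeal I) (hJ : IsIdeal J) :
    (∀ N : Set X, IsIdeal N →
      (∀ i ∈ I, ∀ i' ∈ I, ∀ j ∈ J, ∀ j' ∈ J,
        ((i * i') * (j * j')) * ((i * j) * (i' * j')) ∈ N ∧
        ((i * j) * (i' * j')) * ((i * i') * (j * j')) ∈ N) →
      I ∩ J ⊆ N) ∧
    IsIdeal (I ∩ J) ∧
    (∀ i ∈ I, ∀ i' ∈ I, ∀ j ∈ J, ∀ j' ∈ J,
      ((i * i') * (j * j')) * ((i * j) * (i' * j')) ∈ I ∩ J ∧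
      ((i * j) * (i' * j')) * ((i * i') * (j * j')) ∈ I ∩ J) := by
  refine ⟨?_, ?_, ?_⟩
  · intro N hN hmor x hx
    have h := (hmor x hx.1 1 hI.1 x hx.2 x hx.2).1
    simpa [PreLAlgebra.mul_self, PreLAlgebra.mul_unit, PreLAlgebra.unit_mul] using h
  · exact ⟨⟨hI.1, hJ.1⟩,
      fun x y hx hxy => ⟨hI.2.1 x y hx.1 hxy.1, hJ.2.1 x y hx.2 hxy.2⟩,
      fun x y hx => ⟨hI.2.2.1 x y hx.1, hJ.2.2.1 x y hx.2⟩,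
      fun x y hx => ⟨hI.2.2.2.1 x y hx.1, hJ.2.2.2.1 x y hx.2⟩,
      fun x y hx => ⟨hI.2.2.2.2 x y hx.1, hJ.2.2.2.2 x y hx.2⟩⟩
  · intro i hi i' hi' j hj j' hj'
    -- mod I : i ~ 1, i' ~ 1
    have hi1 : i * (1:X) ∈ I ∧ (1:X) * i ∈ I := ideal_equiv_one hI hi
    have hi1' : i' * (1:X) ∈ I ∧ (1:X) * i' ∈ I := ideal_equiv_one hI hi'
    have hj1 : j * (1:X) ∈ J ∧ (1:X) * j ∈ J := ideal_equiv_one hJ hj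
    have hj1' : j' * (1:X) ∈ J ∧ (1:X) * j' ∈ J := ideal_equiv_one hJ hj'
    have reflI : ∀ a : X, a * a ∈ I ∧ a * a ∈ I := by
      intro a; rw [PreLAlgebra.mul_self]; exact ⟨hI.1, hI.1⟩
    -- A ~ j*j' mod I
    have hA_I : ((i * i') * (j * j')) * ((1 * 1) * (j * j')) ∈ I ∧
        ((1 * 1) * (j * j')) * ((i * i') * (j * j')) ∈ I :=
      ideal_compat hI (ideal_compat hI hi1 hi1')
        ⟨(reflI (j * j')).1, (reflI (j * j')).2⟩
    have hB_I : ((i * j) * (i' * j')) * ((1 * j) * (1 * j')) ∈ I ∧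
        ((1 * j) * (1 * j')) * ((i * j) * (i' * j')) ∈ I :=
      ideal_compat hI (ideal_compat hI hi1 (reflI j))
        (ideal_compat hI hi1' (reflI j'))
    have hAB_I : ((i * i') * (j * j')) * ((i * j) * (i' * j')) ∈ I ∧
        ((i * j) * (i' * j')) * ((i * i') * (j * j')) ∈ I := by
      have e : ((1:X) * 1) * (j * j') = (1 * j) * (1 * j') := by
        simp [PreLAlgebra.unit_mul]
      constructor
      · exact ideal_trans hI hA_I.1 (e ▸ hB_I.2)
      · exact ideal_trans hI hB_I.1 (e ▸ hA_I.2)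
    -- mod J : j ~ 1, j' ~ 1
    have reflJ : ∀ a : X, a * a ∈ J ∧ a * a ∈ J := by
      intro a; rw [PreLAlgebra.mul_self]; exact ⟨hJ.1, hJ.1⟩
    have hA_J : ((i * i') * (j * j')) * ((i * i') * (1 * 1)) ∈ J ∧
        ((i * i') * (1 * 1)) * ((i * i') * (j * j')) ∈ J :=
      ideal_compat hJ (reflJ (i * i')) (ideal_compat hJ hj1 hj1')
    have hB_J : ((i * j) * (i' * j')) * ((i * 1) * (i' * 1)) ∈ J ∧
        ((i * 1) * (i' * 1)) * ((i * j) * (i' * j')) ∈ J :=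
      ideal_compat hJ (ideal_compat hJ (reflJ i) hj1)
        (ideal_compat hJ (reflJ i') hj1')
    have hAB_J : ((i * i') * (j * j')) * ((i * j) * (i' * j')) ∈ J ∧
        ((i * j) * (i' * j')) * ((i * i') * (j * j')) ∈ J := by
      have e : (i * i') * ((1:X) * 1) = (i * 1) * (i' * 1) := by
        simp [PreLAlgebra.mul_unit, PreLAlgebra.unit_mul]
      constructor
      · exact ideal_trans hJ hA_J.1 (e ▸ hB_J.2)
      · exact ideal_trans hJ hB_J.1 (e ▸ hA_J.2)
    exact ⟨⟨hAB_I.1, hAB_J.1⟩, ⟨hAB_I.2, hAB_J.2⟩⟩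
end
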